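/- arXiv:1508.06102 — 3 statements merged into one kernel-verified Lean document; each statement's English description precedes it below -/
import Mathlib

section
/- For all x, y ∈ ℝ^n with |x| ≤ |y| and all t ∈ (0,1], |x - y|^2 ≤ e · |e^{-t} x - y|^2, where e is Euler's number. -/
theorem stmt_1 (n : ℕ) (x y : EuclideanSpace ℝ (Fin n)) (hxy : ‖x‖ ≤ ‖y‖)
    (t : ℝ) (ht : t ∈ Set.Ioc (0:ℝ) 1) :
    ‖x - y‖ ^ 2 ≤ Real.exp 1 * ‖Real.exp (-t) • x - y‖ ^ 2 := by
  obtain ⟨ht0, ht1⟩ := ht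
  set c := Real.exp (-t) with hc
  have hcpos : 0 < c := Real.exp_pos _
  have hc1 : c ≤ 1 := by
    rw [hc]; exact Real.exp_le_one_iff.mpr (by linarith)
  have hE : Real.exp t ≤ Real.exp 1 := Real.exp_le_exp.mpr ht1
  have hEc : Real.exp t * c = 1 := by
    rw [hc, ← Real.exp_add]; simp
  have h1 : ‖x - y‖ ^ 2 = ‖x‖ ^ 2 - 2 * inner ℝ x y + ‖y‖ ^ 2 := by
    rw [← real_inner_self_eq_norm_sq, ← real_inner_self_eq_norm_sq,
      ← real_inner_self_eq_norm_sq, inner_sub_sub_self]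
    ring_nf
    rw [real_inner_comm y x]; ring
  have h2 : ‖c • x - y‖ ^ 2 = c^2 * ‖x‖ ^ 2 - 2 * c * inner ℝ x y + ‖y‖ ^ 2 := by
    rw [@norm_sub_sq_real, norm_smul, real_inner_smul_left, Real.norm_eq_abs,
      abs_of_pos hcpos]
    ring
  have hx2 : ‖x‖^2 ≤ ‖y‖^2 := by
    have := norm_nonneg x
    nlinarith
  have hnn : (0:ℝ) ≤ ‖c • x - y‖ ^ 2 := sq_nonneg _
  have key : ‖x - y‖ ^ 2 ≤ Real.exp t * ‖c • x - y‖ ^ 2 := by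
    rw [h1, h2]
    have hEpos : (0:ℝ) < Real.exp t := Real.exp_pos _
    have h2c : 2 ≤ c + Real.exp t := by nlinarith
    nlinarith [sq_nonneg (c - 1), sq_nonneg (‖y‖)]
  calc ‖x - y‖ ^ 2 ≤ Real.exp t * ‖c • x - y‖ ^ 2 := key
    _ ≤ Real.exp 1 * ‖c • x - y‖ ^ 2 := by nlinarith
end

section
/- Define the Mehler kernel M_t(x,y) = (1 - e^{-2t})^{-n/2} · exp(-e^{-t}|x-y|^2/(1-e^{-2t})) · exp(e^{-t}(|x|^2+|y|^2)/(1+e^{-t})) for x, y ∈ ℝ^n and t > 0. Then there exists a constant C > 0 (depending only on n) such that for all x, y ∈ ℝ^n and all t ∈ (0,1], M_t(x,y) ≤ C · t^{-n/2} · exp(-|x-y|^2/(4t)) · exp((|x|^2+|y|^2)/2). -/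
noncomputable def mehler (n : ℕ) (t : ℝ) (x y : EuclideanSpace ℝ (Fin n)) : ℝ :=
  (1 - Real.exp (-2 * t)) ^ (-(n : ℝ) / 2) *
    Real.exp (-(Real.exp (-t) * ‖x - y‖ ^ 2) / (1 - Real.exp (-2 * t))) *
    Real.exp (Real.exp (-t) * (‖x‖ ^ 2 + ‖y‖ ^ 2) / (1 + Real.exp (-t)))

theorem stmt_4 (n : ℕ) : ∃ C : ℝ, 0 < C ∧
    ∀ (x y : EuclideanSpace ℝ (Fin n)) (t : ℝ), t ∈ Set.Ioc (0:ℝ) 1 →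
      mehler n t x y ≤
        C * t ^ (-(n : ℝ) / 2) * Real.exp (-‖x - y‖ ^ 2 / (4 * t)) *
          Real.exp ((‖x‖ ^ 2 + ‖y‖ ^ 2) / 2) := by
  refine ⟨(2 * Real.exp (-2)) ^ (-(n : ℝ) / 2),
    Real.rpow_pos_of_pos (by positivity) _, ?_⟩
  intro x y t ht
  obtain ⟨ht0, ht1⟩ := ht
  set v := Real.exp (-t) with hv
  have hvpos : 0 < v := Real.exp_pos _
  have hv1 : v < 1 := by
    rw [hv, Real.exp_lt_one_iff]; linarith
  have hv2 : Real.exp (-2 * t) = v * v := by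
    rw [hv, ← Real.exp_add]; ring_nf
  have hvlb : 1 - t ≤ v := by
    have := Real.add_one_le_exp (-t); linarith
  have hv3 : (1:ℝ)/3 ≤ v := by
    have h1 : Real.exp (-1) ≤ v := by
      rw [hv]; exact Real.exp_le_exp.mpr (by linarith)
    have h2 : Real.exp 1 < 3 := by
      have := Real.exp_one_lt_d9; linarith
    have h3 : Real.exp (-1) = (Real.exp 1)⁻¹ := by
      rw [← Real.exp_neg]
    have h4 : (1:ℝ)/3 < (Real.exp 1)⁻¹ := by
      rw [div_lt_iff₀ (by norm_num), inv_mul_eq_div, lt_div_iff₀ (Real.exp_pos 1)]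
      linarith
    linarith [h3 ▸ h1]
  have hden : 0 < 1 - Real.exp (-2 * t) := by
    rw [hv2]; nlinarith
  have hexpneg : -(n : ℝ) / 2 ≤ 0 := by
    have : (0:ℝ) ≤ (n:ℝ) := Nat.cast_nonneg n
    linarith
  -- Factor 1
  have key1 : 2 * Real.exp (-2) * t ≤ 1 - Real.exp (-2 * t) := by
    have ha : Real.exp (-2 * t) * (1 + 2 * t) ≤ 1 := by
      have h := Real.add_one_le_exp (2 * t)
      have := Real.exp_pos (-2 * t)
      have hmul : Real.exp (-2 * t) * Real.exp (2 * t) = 1 := by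
        rw [← Real.exp_add]; ring_nf; exact Real.exp_zero
      nlinarith
    have hb : Real.exp (-2) ≤ Real.exp (-2 * t) := Real.exp_le_exp.mpr (by linarith)
    have := Real.exp_pos (-2 * t)
    nlinarith
  have h1 : (1 - Real.exp (-2 * t)) ^ (-(n : ℝ) / 2) ≤
      (2 * Real.exp (-2)) ^ (-(n : ℝ) / 2) * t ^ (-(n : ℝ) / 2) := by
    rw [← Real.mul_rpow (by positivity) ht0.le]
    exact Real.rpow_le_rpow_of_nonpos (by positivity) key1 hexpneg
  -- Factor 2
  have key2 : 1 - Real.exp (-2 * t) ≤ 4 * t * v := by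
    rw [hv2]; nlinarith
  have h2 : Real.exp (-(v * ‖x - y‖ ^ 2) / (1 - Real.exp (-2 * t))) ≤
      Real.exp (-‖x - y‖ ^ 2 / (4 * t)) := by
    apply Real.exp_le_exp.mpr
    rw [div_le_div_iff₀ hden (by linarith : (0:ℝ) < 4 * t)]
    have hs : (0:ℝ) ≤ ‖x - y‖ ^ 2 := by positivity
    nlinarith
  -- Factor 3
  have h3 : Real.exp (v * (‖x‖ ^ 2 + ‖y‖ ^ 2) / (1 + v)) ≤
      Real.exp ((‖x‖ ^ 2 + ‖y‖ ^ 2) / 2) := by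
    apply Real.exp_le_exp.mpr
    rw [div_le_div_iff₀ (by linarith : (0:ℝ) < 1 + v) (by norm_num : (0:ℝ) < 2)]
    have hs : (0:ℝ) ≤ ‖x‖ ^ 2 + ‖y‖ ^ 2 := by positivity
    nlinarith
  unfold mehler
  rw [← hv]
  calc (1 - Real.exp (-2 * t)) ^ (-(n : ℝ) / 2) *
        Real.exp (-(v * ‖x - y‖ ^ 2) / (1 - Real.exp (-2 * t))) *
        Real.exp (v * (‖x‖ ^ 2 + ‖y‖ ^ 2) / (1 + v)) ≤
      ((2 * Real.exp (-2)) ^ (-(n : ℝ) / 2) * t ^ (-(n : ℝ) / 2)) *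
        Real.exp (-‖x - y‖ ^ 2 / (4 * t)) *
        Real.exp ((‖x‖ ^ 2 + ‖y‖ ^ 2) / 2) := by
        apply mul_le_mul _ h3 (Real.exp_pos _).le (by positivity)
        exact mul_le_mul h1 h2 (Real.exp_pos _).le (by positivity)
    _ = (2 * Real.exp (-2)) ^ (-(n : ℝ) / 2) * t ^ (-(n : ℝ) / 2) *
        Real.exp (-‖x - y‖ ^ 2 / (4 * t)) *
        Real.exp ((‖x‖ ^ 2 + ‖y‖ ^ 2) / 2) := by ring
end

section
/- Let M_t be the Mehler kernel on ℝ^n. There exists a constant C > 0 (depending only on n) such that for all x, y ∈ ℝ^n and all t ∈ (0,1], |t ∂_t M_t(x,y)| ≤ C · t^{-n/2} · exp(-|x-y|^2/(8t)) · exp((|x|^2+|y|^2)/2). -/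
private lemma absorb (z : ℝ) (hz : 0 ≤ z) : z * Real.exp (-z) ≤ 1 := by
  have h1 : z + 1 ≤ Real.exp z := Real.add_one_le_exp z
  have h2 : Real.exp (-z) * Real.exp z = 1 := by
    rw [← Real.exp_add]; simp
  nlinarith [Real.exp_pos (-z), mul_le_mul_of_nonneg_left h1 (Real.exp_pos (-z)).le]


private lemma lem_mul_le_one {x y : ℝ} (hx : x ≤ 1) (hy0 : 0 ≤ y) (hy : y ≤ 1) :
    x * y ≤ 1 := by nlinarith

private lemma lem_absC {c z : ℝ} (hc : 0 ≤ c) (hz : 0 ≤ z) :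
    Real.exp (-z) * (c * z) ≤ c := by
  nlinarith [mul_le_mul_of_nonneg_left (absorb z hz) hc, Real.exp_pos (-z)]

private lemma lem_T1 {t nr a A : ℝ} (ht0 : 0 < t) (hnr : 0 ≤ nr) (ha0 : 0 < a)
    (ha1 : a < 1) (hApos : 0 < A) (hA : 2 * t / 3 ≤ A) :
    t * (nr * a / A) ≤ 3 * nr / 2 := by
  rw [show t * (nr * a / A) = t * nr * a / A by ring, div_le_iff₀ hApos]
  have h1 : t * a ≤ 3 * A / 2 := by nlinarith
  nlinarith [mul_le_mul_of_nonneg_left h1 hnr]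

private lemma lem_w {b a A : ℝ} (hb0 : 0 ≤ b) (hb1 : b ≤ 1) (ha0 : 0 ≤ a) (ha1 : a ≤ 1)
    (hA0 : 0 ≤ A) (hA1 : A ≤ 1) : b * (A + 2 * a) ≤ 3 := by nlinarith

private lemma lem_T2 {t w r2 A : ℝ} (ht0 : 0 < t) (hr2 : 0 ≤ r2) (hApos : 0 < A)
    (hA : 2 * t / 3 ≤ A) (hw0 : 0 ≤ w) (hw : w ≤ 3) :
    t * (w * r2 / A ^ 2) ≤ 27 * r2 / (4 * t) := by
  rw [show t * (w * r2 / A ^ 2) = t * (w * r2) / A ^ 2 by ring,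
    div_le_div_iff₀ (pow_pos hApos 2) (by positivity)]
  have h12 : t * (w * r2) * (4 * t) ≤ 12 * (r2 * t ^ 2) := by
    nlinarith [mul_le_mul_of_nonneg_right hw (mul_nonneg hr2 (sq_nonneg t))]
  have h27 : 12 * (r2 * t ^ 2) ≤ 27 * r2 * A ^ 2 := by
    have hx1 : (0:ℝ) ≤ 3 * A - 2 * t := by linarith
    have hx2 : (0:ℝ) ≤ 3 * A + 2 * t := by linarith
    nlinarith [mul_nonneg (mul_nonneg hr2 hx1) hx2]
  linarith

private lemma lem_T3 {t b S B : ℝ} (ht0 : 0 < t) (hS : 0 ≤ S) (hb0 : 0 < b)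
    (hb1 : b < 1) (hB : 1 ≤ B) : t * (b * S / B ^ 2) ≤ t * S := by
  rw [show t * (b * S / B ^ 2) = t * b * S / B ^ 2 by ring,
    div_le_iff₀ (pow_pos (by linarith) 2)]
  nlinarith [mul_nonneg (mul_nonneg ht0.le hS) (show (0:ℝ) ≤ B ^ 2 - b by nlinarith)]

private lemma lem_F2 {t b r2 A : ℝ} (ht0 : 0 < t) (hr2 : 0 ≤ r2) (hb13 : 1/3 ≤ b)
    (hAle : A ≤ 2 * t) : r2 * A ≤ b * r2 * (6 * t) := by
  have h : A ≤ 6 * t * b := by nlinarith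
  nlinarith [mul_le_mul_of_nonneg_left h hr2]

private lemma lem_key {t b : ℝ} (ht0 : 0 < t) (ht1 : t ≤ 1) (hb13 : 1/3 ≤ b)
    (hbt : b * (1 + t) ≤ 1) : 8 * b ≤ (4 - t) * (1 + b) := by
  nlinarith [mul_nonneg ht0.le (show (0:ℝ) ≤ 3 * b - 1 by linarith)]

private lemma lem_F3 {t b S : ℝ} (hS : 0 ≤ S) (hkey : 8 * b ≤ (4 - t) * (1 + b)) :
    b * S ≤ (S / 2 + -(t * S / 8)) * (1 + b) := by
  nlinarith [mul_le_mul_of_nonneg_right hkey hS]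

set_option maxHeartbeats 4000000 in
theorem stmt_6 (n : ℕ) : ∃ C : ℝ, 0 < C ∧
    ∀ (x y : EuclideanSpace ℝ (Fin n)) (t : ℝ), t ∈ Set.Ioc (0:ℝ) 1 →
      |t * deriv (fun s => mehler n s x y) t| ≤
        C * t ^ (-(n : ℝ) / 2) * Real.exp (-‖x - y‖ ^ 2 / (8 * t)) *
          Real.exp ((‖x‖ ^ 2 + ‖y‖ ^ 2) / 2) := by
  refine ⟨(3/2 : ℝ) ^ ((n : ℝ)/2) * (3 * n / 2 + 170), by positivity, ?_⟩
  rintro x y t ⟨ht0, ht1⟩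
  -- basic positivity facts
  have hb_pos : 0 < Real.exp (-t) := Real.exp_pos _
  have ha_pos : 0 < Real.exp (-2 * t) := Real.exp_pos _
  have ha_lt : Real.exp (-2 * t) < 1 := by
    rw [Real.exp_lt_one_iff]; linarith
  have hA_pos : 0 < 1 - Real.exp (-2 * t) := by linarith
  have hAne : 1 - Real.exp (-2 * t) ≠ 0 := ne_of_gt hA_pos
  have hB_pos : 0 < 1 + Real.exp (-t) := by positivity
  have hBne : 1 + Real.exp (-t) ≠ 0 := ne_of_gt hB_pos
  have hb_lt : Real.exp (-t) < 1 := by rw [Real.exp_lt_one_iff]; linarith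
  -- key elementary estimates
  have hbt : Real.exp (-t) * (1 + t) ≤ 1 := by
    have h1 : (1 + t) ≤ Real.exp t := by
      have := Real.add_one_le_exp t; linarith
    have h2 : Real.exp (-t) * Real.exp t = 1 := by rw [← Real.exp_add]; simp
    nlinarith [hb_pos]
  have hat : Real.exp (-2 * t) * (1 + 2 * t) ≤ 1 := by
    have h1 : (1 + 2 * t) ≤ Real.exp (2 * t) := by
      have := Real.add_one_le_exp (2 * t); linarith
    have h2 : Real.exp (-2 * t) * Real.exp (2 * t) = 1 := by
      rw [← Real.exp_add]; ring_nf; rw [Real.exp_zero]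
    nlinarith [ha_pos]
  have hA_ge : 2 * t / 3 ≤ 1 - Real.exp (-2 * t) := by nlinarith [ha_pos]
  have hA_le : 1 - Real.exp (-2 * t) ≤ 2 * t := by
    have := Real.add_one_le_exp (-2 * t); linarith
  have hb13 : 1 / 3 ≤ Real.exp (-t) := by
    have h1 : Real.exp (-1 : ℝ) ≤ Real.exp (-t) := Real.exp_le_exp.mpr (by linarith)
    have h2 : Real.exp (1 : ℝ) ≤ 3 := by
      have := Real.exp_one_lt_d9; norm_num at this ⊢; linarith
    have h3 : Real.exp (-1 : ℝ) * Real.exp (1 : ℝ) = 1 := by rw [← Real.exp_add]; simp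
    nlinarith [Real.exp_pos (-1 : ℝ)]
  -- derivative computation
  have h2d : HasDerivAt (fun s : ℝ => -2 * s) (-2 : ℝ) t := by
    simpa using (hasDerivAt_id t).const_mul (-2 : ℝ)
  have hm1 : HasDerivAt (fun s : ℝ => -s) (-1 : ℝ) t := by
    exact hasDerivAt_neg t
  have hexp2 : HasDerivAt (fun s : ℝ => Real.exp (-2 * s)) (Real.exp (-2 * t) * -2) t := h2d.exp
  have hexp1 : HasDerivAt (fun s : ℝ => Real.exp (-s)) (Real.exp (-t) * -1) t := hm1.exp
  have hAd : HasDerivAt (fun s : ℝ => 1 - Real.exp (-2 * s)) (0 - Real.exp (-2 * t) * -2) t :=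
    (hasDerivAt_const t 1).sub hexp2
  have hF1d : HasDerivAt (fun s : ℝ => (1 - Real.exp (-2 * s)) ^ (-(n : ℝ) / 2))
      ((0 - Real.exp (-2 * t) * -2) * (-(n : ℝ) / 2) *
        (1 - Real.exp (-2 * t)) ^ (-(n : ℝ) / 2 - 1)) t :=
    hAd.rpow_const (Or.inl hAne)
  have hnum : HasDerivAt (fun s : ℝ => -(Real.exp (-s) * ‖x - y‖ ^ 2))
      (-(Real.exp (-t) * -1 * ‖x - y‖ ^ 2)) t := (hexp1.mul_const _).neg
  have hud : HasDerivAt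
      (fun s : ℝ => -(Real.exp (-s) * ‖x - y‖ ^ 2) / (1 - Real.exp (-2 * s)))
      ((-(Real.exp (-t) * -1 * ‖x - y‖ ^ 2) * (1 - Real.exp (-2 * t)) -
        -(Real.exp (-t) * ‖x - y‖ ^ 2) * (0 - Real.exp (-2 * t) * -2)) /
        (1 - Real.exp (-2 * t)) ^ 2) t := hnum.div hAd hAne
  have hF2d : HasDerivAt
      (fun s : ℝ => Real.exp (-(Real.exp (-s) * ‖x - y‖ ^ 2) / (1 - Real.exp (-2 * s))))
      (Real.exp (-(Real.exp (-t) * ‖x - y‖ ^ 2) / (1 - Real.exp (-2 * t))) *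
        ((-(Real.exp (-t) * -1 * ‖x - y‖ ^ 2) * (1 - Real.exp (-2 * t)) -
          -(Real.exp (-t) * ‖x - y‖ ^ 2) * (0 - Real.exp (-2 * t) * -2)) /
          (1 - Real.exp (-2 * t)) ^ 2)) t := hud.exp
  have hPd : HasDerivAt (fun s : ℝ => Real.exp (-s) * (‖x‖ ^ 2 + ‖y‖ ^ 2))
      (Real.exp (-t) * -1 * (‖x‖ ^ 2 + ‖y‖ ^ 2)) t := hexp1.mul_const _
  have hBd : HasDerivAt (fun s : ℝ => 1 + Real.exp (-s)) (0 + Real.exp (-t) * -1) t :=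
    (hasDerivAt_const t 1).add hexp1
  have hvd : HasDerivAt
      (fun s : ℝ => Real.exp (-s) * (‖x‖ ^ 2 + ‖y‖ ^ 2) / (1 + Real.exp (-s)))
      ((Real.exp (-t) * -1 * (‖x‖ ^ 2 + ‖y‖ ^ 2) * (1 + Real.exp (-t)) -
        Real.exp (-t) * (‖x‖ ^ 2 + ‖y‖ ^ 2) * (0 + Real.exp (-t) * -1)) /
        (1 + Real.exp (-t)) ^ 2) t := hPd.div hBd hBne
  have hF3d : HasDerivAt
      (fun s : ℝ => Real.exp (Real.exp (-s) * (‖x‖ ^ 2 + ‖y‖ ^ 2) / (1 + Real.exp (-s))))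
      (Real.exp (Real.exp (-t) * (‖x‖ ^ 2 + ‖y‖ ^ 2) / (1 + Real.exp (-t))) *
        ((Real.exp (-t) * -1 * (‖x‖ ^ 2 + ‖y‖ ^ 2) * (1 + Real.exp (-t)) -
          Real.exp (-t) * (‖x‖ ^ 2 + ‖y‖ ^ 2) * (0 + Real.exp (-t) * -1)) /
          (1 + Real.exp (-t)) ^ 2)) t := hvd.exp
  have hM : HasDerivAt
      (fun s : ℝ => (1 - Real.exp (-2 * s)) ^ (-(n : ℝ) / 2) *
        Real.exp (-(Real.exp (-s) * ‖x - y‖ ^ 2) / (1 - Real.exp (-2 * s))) *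
        Real.exp (Real.exp (-s) * (‖x‖ ^ 2 + ‖y‖ ^ 2) / (1 + Real.exp (-s))))
      ((((0 - Real.exp (-2 * t) * -2) * (-(n : ℝ) / 2) *
          (1 - Real.exp (-2 * t)) ^ (-(n : ℝ) / 2 - 1)) *
          Real.exp (-(Real.exp (-t) * ‖x - y‖ ^ 2) / (1 - Real.exp (-2 * t))) +
        (1 - Real.exp (-2 * t)) ^ (-(n : ℝ) / 2) *
          (Real.exp (-(Real.exp (-t) * ‖x - y‖ ^ 2) / (1 - Real.exp (-2 * t))) *
            ((-(Real.exp (-t) * -1 * ‖x - y‖ ^ 2) * (1 - Real.exp (-2 * t)) -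
              -(Real.exp (-t) * ‖x - y‖ ^ 2) * (0 - Real.exp (-2 * t) * -2)) /
              (1 - Real.exp (-2 * t)) ^ 2))) *
        Real.exp (Real.exp (-t) * (‖x‖ ^ 2 + ‖y‖ ^ 2) / (1 + Real.exp (-t))) +
        (1 - Real.exp (-2 * t)) ^ (-(n : ℝ) / 2) *
          Real.exp (-(Real.exp (-t) * ‖x - y‖ ^ 2) / (1 - Real.exp (-2 * t))) *
          (Real.exp (Real.exp (-t) * (‖x‖ ^ 2 + ‖y‖ ^ 2) / (1 + Real.exp (-t))) *
            ((Real.exp (-t) * -1 * (‖x‖ ^ 2 + ‖y‖ ^ 2) * (1 + Real.exp (-t)) -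
              Real.exp (-t) * (‖x‖ ^ 2 + ‖y‖ ^ 2) * (0 + Real.exp (-t) * -1)) /
              (1 + Real.exp (-t)) ^ 2))) t := (hF1d.mul hF2d).mul hF3d
  have hfun : (fun s => mehler n s x y) =
      (fun s : ℝ => (1 - Real.exp (-2 * s)) ^ (-(n : ℝ) / 2) *
        Real.exp (-(Real.exp (-s) * ‖x - y‖ ^ 2) / (1 - Real.exp (-2 * s))) *
        Real.exp (Real.exp (-s) * (‖x‖ ^ 2 + ‖y‖ ^ 2) / (1 + Real.exp (-s)))) := rfl
  rw [hfun, hM.deriv]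
  -- abbreviations
  set r2 : ℝ := ‖x - y‖ ^ 2 with hr2def
  set S : ℝ := ‖x‖ ^ 2 + ‖y‖ ^ 2 with hSdef
  have hr2 : 0 ≤ r2 := by positivity
  have hS : 0 ≤ S := by positivity
  set a : ℝ := Real.exp (-2 * t) with hadef
  set b : ℝ := Real.exp (-t) with hbdef
  set A : ℝ := 1 - a with hAdef
  set B : ℝ := 1 + b with hBdef
  set P : ℝ := A ^ (-(n : ℝ) / 2) with hPdef
  set F2 : ℝ := Real.exp (-(b * r2) / A) with hF2def
  set F3 : ℝ := Real.exp (b * S / B) with hF3def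
  have hQP : A ^ (-(n : ℝ) / 2 - 1) = P / A := by
    rw [hPdef, Real.rpow_sub_one hAne]
  have hP_pos : 0 < P := Real.rpow_pos_of_pos hA_pos _
  have hF2_pos : 0 < F2 := Real.exp_pos _
  have hF3_pos : 0 < F3 := Real.exp_pos _
  set E : ℝ := b * r2 * (A + 2 * a) / A ^ 2 - (n : ℝ) * a / A - b * S / B ^ 2 with hEdef
  have heq : t * (((0 - a * -2) * (-(n : ℝ) / 2) * A ^ (-(n : ℝ) / 2 - 1) * F2 +
      P * (F2 * ((-(b * -1 * r2) * A - -(b * r2) * (0 - a * -2)) / A ^ 2))) * F3 +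
      P * F2 * (F3 * ((b * -1 * S * B - b * S * (0 + b * -1)) / B ^ 2))) =
      (t * (P * F2 * F3)) * E := by
    rw [hQP, hEdef]
    field_simp
    ring
  rw [heq, abs_mul, abs_of_pos (show (0:ℝ) < t * (P * F2 * F3) by positivity)]
  clear heq hM hfun hF1d hF2d hF3d hud hvd hnum hPd hBd hAd hexp1 hexp2 h2d hm1
  clear_value E F3 F2 P B A b a S r2
  -- bounds on the error terms
  have hE1 : 0 ≤ (n : ℝ) * a / A :=
    div_nonneg (mul_nonneg (Nat.cast_nonneg n) ha_pos.le) hA_pos.le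
  have hE2 : 0 ≤ b * r2 * (A + 2 * a) / A ^ 2 :=
    div_nonneg (mul_nonneg (mul_nonneg hb_pos.le hr2) (by linarith)) (sq_nonneg A)
  have hE3 : 0 ≤ b * S / B ^ 2 :=
    div_nonneg (mul_nonneg hb_pos.le hS) (sq_nonneg B)
  have habsE : |E| ≤ (n : ℝ) * a / A + b * r2 * (A + 2 * a) / A ^ 2 + b * S / B ^ 2 := by
    rw [hEdef, abs_le]; constructor <;> linarith
  have hT1 : t * ((n : ℝ) * a / A) ≤ 3 * (n : ℝ) / 2 :=
    lem_T1 ht0 (Nat.cast_nonneg n) ha_pos ha_lt hA_pos hA_ge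
  have hA1 : A ≤ 1 := by rw [hAdef]; linarith
  have hT2 : t * (b * r2 * (A + 2 * a) / A ^ 2) ≤ 27 * r2 / (4 * t) := by
    have hw : b * (A + 2 * a) ≤ 3 :=
      lem_w hb_pos.le hb_lt.le ha_pos.le ha_lt.le hA_pos.le hA1
    calc t * (b * r2 * (A + 2 * a) / A ^ 2)
        = t * (b * (A + 2 * a) * r2 / A ^ 2) := by ring
      _ ≤ 27 * r2 / (4 * t) :=
          lem_T2 ht0 hr2 hA_pos hA_ge (mul_nonneg hb_pos.le (by linarith)) hw
  have hB1 : 1 ≤ B := by rw [hBdef]; linarith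
  have hT3 : t * (b * S / B ^ 2) ≤ t * S := lem_T3 ht0 hS hb_pos hb_lt hB1
  -- bounds on the main factors
  have hexpneg : -(n : ℝ) / 2 ≤ 0 := by
    have : (0:ℝ) ≤ (n : ℝ) := Nat.cast_nonneg n
    linarith
  have hPb : P ≤ (3/2 : ℝ) ^ ((n : ℝ)/2) * t ^ (-(n : ℝ) / 2) := by
    have h1 : P ≤ (2 * t / 3) ^ (-(n : ℝ) / 2) := by
      rw [hPdef]
      exact Real.rpow_le_rpow_of_nonpos (by positivity) hA_ge hexpneg
    have h2 : ((2 : ℝ) * t / 3) ^ (-(n : ℝ) / 2) =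
        ((2:ℝ)/3) ^ (-(n : ℝ) / 2) * t ^ (-(n : ℝ) / 2) := by
      rw [show (2 : ℝ) * t / 3 = (2/3) * t by ring, Real.mul_rpow (by norm_num) ht0.le]
    have h3 : ((2:ℝ)/3) ^ (-(n : ℝ) / 2) = (3/2 : ℝ) ^ ((n : ℝ)/2) := by
      rw [show (-(n : ℝ) / 2) = -((n : ℝ)/2) by ring, Real.rpow_neg (by norm_num),
        show (3/2 : ℝ) = ((2:ℝ)/3)⁻¹ by norm_num, Real.inv_rpow (by norm_num)]
    rw [h2, h3] at h1
    exact h1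
  have hF2b : F2 ≤ Real.exp (-r2 / (8 * t)) * Real.exp (-r2 / (24 * t)) := by
    rw [hF2def, ← Real.exp_add]
    apply Real.exp_le_exp.mpr
    have harg : -r2 / (8 * t) + -r2 / (24 * t) = -(r2 / (6 * t)) := by
      field_simp; ring
    rw [harg, neg_div, neg_le_neg_iff,
      div_le_div_iff₀ (show (0:ℝ) < 6 * t by positivity) hA_pos]
    exact lem_F2 ht0 hr2 hb13 hA_le
  have hF3b : F3 ≤ Real.exp (S / 2) * Real.exp (-(t * S / 8)) := by
    rw [hF3def, ← Real.exp_add]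
    apply Real.exp_le_exp.mpr
    rw [div_le_iff₀ hB_pos, hBdef]
    exact lem_F3 hS (lem_key ht0 ht1 hb13 hbt)
  have hE24 : Real.exp (-r2 / (24 * t)) ≤ 1 := by
    apply Real.exp_le_one_iff.mpr
    rw [neg_div]
    have : (0:ℝ) ≤ r2 / (24 * t) := div_nonneg hr2 (by positivity)
    linarith
  have hEt : Real.exp (-(t * S / 8)) ≤ 1 := by
    apply Real.exp_le_one_iff.mpr
    have : (0:ℝ) ≤ t * S / 8 := div_nonneg (mul_nonneg ht0.le hS) (by norm_num)
    linarith
  have hAbs2 : Real.exp (-r2 / (24 * t)) * (27 * r2 / (4 * t)) ≤ 162 := by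
    rw [show -r2 / (24 * t) = -(r2 / (24 * t)) by ring,
      show 27 * r2 / (4 * t) = 162 * (r2 / (24 * t)) by field_simp [ht0.ne']; ring]
    exact lem_absC (by norm_num) (div_nonneg hr2 (by positivity))
  have hAbs3 : Real.exp (-(t * S / 8)) * (t * S) ≤ 8 := by
    calc Real.exp (-(t * S / 8)) * (t * S)
        = Real.exp (-(t * S / 8)) * (8 * (t * S / 8)) := by ring
      _ ≤ 8 := lem_absC (by norm_num) (div_nonneg (mul_nonneg ht0.le hS) (by norm_num))
  -- assemble
  have hPF : P * F2 * F3 ≤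
      (3/2 : ℝ) ^ ((n : ℝ)/2) * t ^ (-(n : ℝ) / 2) *
        (Real.exp (-r2 / (8 * t)) * Real.exp (-r2 / (24 * t))) *
        (Real.exp (S / 2) * Real.exp (-(t * S / 8))) :=
    mul_le_mul (mul_le_mul hPb hF2b hF2_pos.le (by positivity)) hF3b hF3_pos.le
      (mul_nonneg (by positivity) (mul_nonneg (Real.exp_pos _).le (Real.exp_pos _).le))
  set c32 : ℝ := (3/2 : ℝ) ^ ((n : ℝ)/2) with hc32def
  set G : ℝ := t ^ (-(n : ℝ) / 2) with hGdef
  set E8 : ℝ := Real.exp (-r2 / (8 * t)) with hE8def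
  set E24 : ℝ := Real.exp (-r2 / (24 * t)) with hE24def
  set ES : ℝ := Real.exp (S / 2) with hESdef
  set Et : ℝ := Real.exp (-(t * S / 8)) with hEtdef
  have hc32_pos : 0 < c32 := Real.rpow_pos_of_pos (by norm_num) _
  have hG_pos : 0 < G := Real.rpow_pos_of_pos ht0 _
  have hE8_pos : 0 < E8 := Real.exp_pos _
  have hE24_pos : 0 < E24 := Real.exp_pos _
  have hES_pos : 0 < ES := Real.exp_pos _
  have hEt_pos : 0 < Et := Real.exp_pos _
  clear_value c32 G E8 E24 ES Et
  have hcore : (0:ℝ) < c32 * G * E8 * ES :=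
    mul_pos (mul_pos (mul_pos hc32_pos hG_pos) hE8_pos) hES_pos
  have hX1 : (c32 * G * (E8 * E24) * (ES * Et)) * (3 * (n : ℝ) / 2) ≤
      c32 * G * E8 * ES * (3 * (n : ℝ) / 2) := by
    have h : E24 * Et ≤ 1 := lem_mul_le_one hE24 hEt_pos.le hEt
    calc (c32 * G * (E8 * E24) * (ES * Et)) * (3 * (n : ℝ) / 2)
        = (c32 * G * E8 * ES * (3 * (n : ℝ) / 2)) * (E24 * Et) := by ring
      _ ≤ (c32 * G * E8 * ES * (3 * (n : ℝ) / 2)) * 1 :=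
          mul_le_mul_of_nonneg_left h (mul_nonneg hcore.le (by positivity))
      _ = c32 * G * E8 * ES * (3 * (n : ℝ) / 2) := by ring
  have hX2 : (c32 * G * (E8 * E24) * (ES * Et)) * (27 * r2 / (4 * t)) ≤
      c32 * G * E8 * ES * 162 := by
    calc (c32 * G * (E8 * E24) * (ES * Et)) * (27 * r2 / (4 * t))
        = (c32 * G * E8 * ES) * (Et * (E24 * (27 * r2 / (4 * t)))) := by ring
      _ ≤ (c32 * G * E8 * ES) * (1 * 162) := by
          apply mul_le_mul_of_nonneg_left _ hcore.le
          exact mul_le_mul hEt hAbs2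
            (mul_nonneg hE24_pos.le (div_nonneg (by linarith) (by positivity))) (by norm_num)
      _ = c32 * G * E8 * ES * 162 := by ring
  have hX3 : (c32 * G * (E8 * E24) * (ES * Et)) * (t * S) ≤
      c32 * G * E8 * ES * 8 := by
    calc (c32 * G * (E8 * E24) * (ES * Et)) * (t * S)
        = (c32 * G * E8 * ES) * (E24 * (Et * (t * S))) := by ring
      _ ≤ (c32 * G * E8 * ES) * (1 * 8) := by
          apply mul_le_mul_of_nonneg_left _ hcore.le
          exact mul_le_mul hE24 hAbs3
            (mul_nonneg hEt_pos.le (mul_nonneg ht0.le hS)) (by norm_num)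
      _ = c32 * G * E8 * ES * 8 := by ring
  calc t * (P * F2 * F3) * |E|
      ≤ t * (P * F2 * F3) *
        ((n : ℝ) * a / A + b * r2 * (A + 2 * a) / A ^ 2 + b * S / B ^ 2) :=
        mul_le_mul_of_nonneg_left habsE
          (mul_nonneg ht0.le (mul_nonneg (mul_nonneg hP_pos.le hF2_pos.le) hF3_pos.le))
    _ = (P * F2 * F3) * (t * ((n : ℝ) * a / A)) +
        (P * F2 * F3) * (t * (b * r2 * (A + 2 * a) / A ^ 2)) +
        (P * F2 * F3) * (t * (b * S / B ^ 2)) := by ring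
    _ ≤ (P * F2 * F3) * (3 * (n : ℝ) / 2) + (P * F2 * F3) * (27 * r2 / (4 * t)) +
        (P * F2 * F3) * (t * S) := by
        have hPF3 : (0:ℝ) ≤ P * F2 * F3 :=
          mul_nonneg (mul_nonneg hP_pos.le hF2_pos.le) hF3_pos.le
        have := mul_le_mul_of_nonneg_left hT1 hPF3
        have := mul_le_mul_of_nonneg_left hT2 hPF3
        have := mul_le_mul_of_nonneg_left hT3 hPF3
        linarith
    _ ≤ (c32 * G * (E8 * E24) * (ES * Et)) * (3 * (n : ℝ) / 2) +
        (c32 * G * (E8 * E24) * (ES * Et)) * (27 * r2 / (4 * t)) +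
        (c32 * G * (E8 * E24) * (ES * Et)) * (t * S) := by
        have h1 := mul_le_mul_of_nonneg_right hPF
          (by positivity : (0:ℝ) ≤ 3 * (n : ℝ) / 2)
        have h2 := mul_le_mul_of_nonneg_right hPF
          (div_nonneg (by linarith : (0:ℝ) ≤ 27 * r2) (by positivity : (0:ℝ) ≤ 4 * t))
        have h3 := mul_le_mul_of_nonneg_right hPF (mul_nonneg ht0.le hS)
        linarith
    _ ≤ c32 * G * E8 * ES * (3 * (n : ℝ) / 2) + c32 * G * E8 * ES * 162 +
        c32 * G * E8 * ES * 8 := by linarith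
    _ = c32 * (3 * (n : ℝ) / 2 + 170) * G * E8 * ES := by ring
end
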